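/- Let C be a category and let F : Cᵒᵖ → Ab be a contravariant functor whose composition with the forgetful functor Ab → Set is representable, i.e., naturally isomorphic to Mor_C(·, Y) for some object Y of C. Then every finite homogeneous functorial semi-norm on F is trivial: for every object X and every α ∈ F(X) one has |α| = 0. -/

import Mathlib

open CategoryTheory

universe u v

/-- A finite functorial semi-norm on a contravariant functor `F : Cᵒᵖ ⥤ Ab`. -/
structure ContraFunctorialSeminorm {C : Type u} [Category.{v} C]
    (F : Cᵒᵖ ⥤ AddCommGrpCat.{v}) where
  ν : ∀ X : C, F.obj (Opposite.op X) → ℝ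
  nonneg : ∀ (X : C) (x : F.obj (Opposite.op X)), 0 ≤ ν X x
  map_zero : ∀ X : C, ν X 0 = 0
  map_neg : ∀ (X : C) (x : F.obj (Opposite.op X)), ν X (-x) = ν X x
  add_le : ∀ (X : C) (x y : F.obj (Opposite.op X)), ν X (x + y) ≤ ν X x + ν X y
  functorial : ∀ {Y X : C} (f : Y ⟶ X) (x : F.obj (Opposite.op X)),
    ν Y (F.map f.op x) ≤ ν X x

/-- Homogeneity of a functorial semi-norm. -/
def ContraFunctorialSeminorm.Homogeneous {C : Type u} [Category.{v} C]
    {F : Cᵒᵖ ⥤ AddCommGrpCat.{v}} (N : ContraFunctorialSeminorm F) : Prop :=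
  ∀ (X : C) (n : ℤ), n ≠ 0 → ∀ x : F.obj (Opposite.op X),
    N.ν X (n • x) = |(n : ℝ)| * N.ν X x

/-- Every finite homogeneous functorial semi-norm on a representable
contravariant functor `F : Cᵒᵖ ⥤ Ab` is trivial. -/
theorem seminorm_trivial_of_representable_contravariant {C : Type u} [Category.{v} C]
    (F : Cᵒᵖ ⥤ AddCommGrpCat.{v}) (Y : C)
    (η : yoneda.obj Y ≅ F ⋙ forget AddCommGrpCat.{v})
    (N : ContraFunctorialSeminorm F) (hN : N.Homogeneous) :
    ∀ (X : C) (α : F.obj (Opposite.op X)), N.ν X α = 0 := by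
  set e : F.obj (Opposite.op Y) := η.hom.app (Opposite.op Y) (𝟙 Y) with he
  have key : ∀ (X : C) (α : F.obj (Opposite.op X)), N.ν X α ≤ N.ν Y e := by
    intro X α
    set f : X ⟶ Y := η.inv.app (Opposite.op X) α with hf
    have hnat := congrArg (fun g => g (𝟙 Y)) (η.hom.naturality f.op)
    have h1 : (yoneda.obj Y).map f.op (𝟙 Y) = f := by
      simp
    have h2 : η.hom.app (Opposite.op X) f = α := by
      rw [hf]
      exact congrArg (fun g => g α) (η.inv_hom_id_app (Opposite.op X))
    have hα : α = F.map f.op e := by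
      simpa [h1, h2] using hnat
    rw [hα]
    exact N.functorial f e
  intro X α
  refine le_antisymm ?_ (N.nonneg X α)
  by_contra h
  push_neg at h
  obtain ⟨n, hn⟩ := exists_nat_gt (N.ν Y e / N.ν X α)
  have hpos : 0 < N.ν X α := h
  have hne : ((n + 1 : ℕ) : ℤ) ≠ 0 := by positivity
  have := key X (((n + 1 : ℕ) : ℤ) • α)
  rw [hN X _ hne α] at this
  have habs : |(((n + 1 : ℕ) : ℤ) : ℝ)| = (n : ℝ) + 1 := by
    push_cast
    rw [abs_of_pos] <;> positivity
  rw [habs] at this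
  have : N.ν Y e / N.ν X α ≥ (n : ℝ) + 1 := by
    rw [ge_iff_le, le_div_iff₀ hpos]
    linarith
  linarith
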